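/- lim_{n→∞} n^{1/2} · π(2,n) = 2/√π, where π(2,n) is the probability that a random game G(2,n) is strict-dominance solvable. -/

import Mathlib

open Finset Filter

noncomputable section

/-- Row action `i` is strictly dominated in the restricted game with Row actions `X`
and Column actions `Y`, for Row payoff matrix `R`. -/
def RowDomIn {m n : ℕ} (R : Fin m → Fin n → ℝ) (X : Finset (Fin m)) (Y : Finset (Fin n))
    (i : Fin m) : Prop :=
  ∃ i' ∈ X, ∀ j ∈ Y, R i j < R i' j

/-- Column action `j` is strictly dominated in the restricted game with Row actions `X`
and Column actions `Y`, for Column payoff matrix `C`. -/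
def ColDomIn {m n : ℕ} (C : Fin m → Fin n → ℝ) (X : Finset (Fin m)) (Y : Finset (Fin n))
    (j : Fin n) : Prop :=
  ∃ j' ∈ Y, ∀ i ∈ X, C i j < C i j'

open Classical in
/-- One round of iterated elimination: simultaneously delete every strictly dominated
action of both players in the current restricted game. -/
def elimStep {m n : ℕ} (R C : Fin m → Fin n → ℝ)
    (p : Finset (Fin m) × Finset (Fin n)) : Finset (Fin m) × Finset (Fin n) :=
  (p.1.filter fun i => ¬ RowDomIn R p.1 p.2 i,
   p.2.filter fun j => ¬ ColDomIn C p.1 p.2 j)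

/-- Surviving actions of the subgame `(p.1, p.2)` after iterated elimination of strictly
dominated actions (iterating `m + n` times surely reaches the fixed point). -/
def survivorsFrom {m n : ℕ} (R C : Fin m → Fin n → ℝ)
    (p : Finset (Fin m) × Finset (Fin n)) : Finset (Fin m) × Finset (Fin n) :=
  (elimStep R C)^[m + n] p

/-- The subgame `(p.1, p.2)` is strict-dominance solvable: exactly one action of each
player survives iterated elimination of strictly dominated actions. -/
def SolvableFrom {m n : ℕ} (R C : Fin m → Fin n → ℝ)
    (p : Finset (Fin m) × Finset (Fin n)) : Prop :=
  (survivorsFrom R C p).1.card = 1 ∧ (survivorsFrom R C p).2.card = 1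

/-- Surviving actions of the full game after iterated elimination. -/
def survivors {m n : ℕ} (R C : Fin m → Fin n → ℝ) : Finset (Fin m) × Finset (Fin n) :=
  survivorsFrom R C (Finset.univ, Finset.univ)

/-- The game is strict-dominance solvable. -/
def Solvable {m n : ℕ} (R C : Fin m → Fin n → ℝ) : Prop :=
  SolvableFrom R C (Finset.univ, Finset.univ)

/-- The number of rounds performed by the iterated elimination procedure:
the least `k` such that round `k + 1` deletes nothing more. -/
def elimRounds {m n : ℕ} (R C : Fin m → Fin n → ℝ) : ℕ :=
  sInf {k | (elimStep R C)^[k + 1] (Finset.univ, Finset.univ)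
          = (elimStep R C)^[k] (Finset.univ, Finset.univ)}

/-- Sample space of the random game `G(m,n)`: for each Column action an i.i.d. uniform
permutation giving Row's ordinal payoffs in that column, and for each Row action an
i.i.d. uniform permutation giving Column's ordinal payoffs in that row. -/
abbrev Omega (m n : ℕ) := (Fin n → Equiv.Perm (Fin m)) × (Fin m → Equiv.Perm (Fin n))

/-- Row's payoff matrix of the realized game. -/
def RPay {m n : ℕ} (ω : Omega m n) : Fin m → Fin n → ℝ := fun i j => ((ω.1 j) i : ℕ)

/-- Column's payoff matrix of the realized game. -/
def CPay {m n : ℕ} (ω : Omega m n) : Fin m → Fin n → ℝ := fun i j => ((ω.2 i) j : ℕ)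

/-- Probability of an event under the uniform distribution on `Omega m n`
(i.e. all `m + n` permutations uniform and mutually independent). -/
def Pr {m n : ℕ} (E : Set (Omega m n)) : ℝ :=
  (E.toFinite.toFinset.card : ℝ) / (Fintype.card (Omega m n) : ℝ)

open Classical in
/-- Number of Row actions that are not strictly dominated. -/
def UR {m n : ℕ} (ω : Omega m n) : ℕ :=
  (Finset.univ.filter fun i => ¬ RowDomIn (RPay ω) Finset.univ Finset.univ i).card

open Classical in
/-- Number of Column actions that are not strictly dominated. -/
def UC {m n : ℕ} (ω : Omega m n) : ℕ :=
  (Finset.univ.filter fun j => ¬ ColDomIn (CPay ω) Finset.univ Finset.univ j).card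

/-- Number of Row actions surviving iterated elimination. -/
def SR {m n : ℕ} (ω : Omega m n) : ℕ := (survivors (RPay ω) (CPay ω)).1.card

/-- Number of Column actions surviving iterated elimination. -/
def SC {m n : ℕ} (ω : Omega m n) : ℕ := (survivors (RPay ω) (CPay ω)).2.card

/-- The realized game is strict-dominance solvable. -/
def GameSolvable {m n : ℕ} (ω : Omega m n) : Prop := Solvable (RPay ω) (CPay ω)

/-- Number of rounds of the iterated elimination procedure in the realized game. -/
def GameRounds {m n : ℕ} (ω : Omega m n) : ℕ := elimRounds (RPay ω) (CPay ω)

/-- `π(m,n)`: probability that the random game `G(m,n)` is strict-dominance solvable. -/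
def probSolvable (m n : ℕ) : ℝ := Pr {ω : Omega m n | GameSolvable ω}

/-- Expected number of Column's strictly undominated actions, `E[U^C(m,n)]`. -/
def expUC (m n : ℕ) : ℝ :=
  (∑ ω : Omega m n, (UC ω : ℝ)) / (Fintype.card (Omega m n) : ℝ)

/-- Expected number of Column actions surviving iterated elimination, `E[S^C(m,n)]`. -/
def expSC (m n : ℕ) : ℝ :=
  (∑ ω : Omega m n, (SC ω : ℝ)) / (Fintype.card (Omega m n) : ℝ)

open Classical in
/-- `E[I(m,n)]`: expected number of elimination rounds conditional on the game being
strict-dominance solvable. -/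
def condExpRounds (m n : ℕ) : ℝ :=
  (∑ ω : Omega m n, if GameSolvable ω then (GameRounds ω : ℝ) else 0) /
    (∑ ω : Omega m n, if GameSolvable ω then (1 : ℝ) else 0)

/-- Unsigned Stirling numbers of the first kind. -/
def stirling1 : ℕ → ℕ → ℕ
  | 0, 0 => 1
  | 0, _ + 1 => 0
  | _ + 1, 0 => 0
  | n + 1, k + 1 => n * stirling1 n (k + 1) + stirling1 n k

end

section Aux

open Equiv

open Classical in
def recSet {n : ℕ} (τ : Equiv.Perm (Fin n)) : Finset (Fin n) :=
  Finset.univ.filter fun k => ∀ k', k < k' → τ k' < τ k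

lemma mem_recSet {n : ℕ} {τ : Equiv.Perm (Fin n)} {k : Fin n} :
    k ∈ recSet τ ↔ ∀ k', k < k' → τ k' < τ k := by
  simp [recSet]

def Dsum (n : ℕ) : ℕ := ∑ τ : Equiv.Perm (Fin n), 2 ^ (n - (recSet τ).card)

def insFun {n : ℕ} (p : Fin (n + 1)) (σ : Perm (Fin n)) : Fin (n + 1) → Fin (n + 1) :=
  Fin.cases p (fun i => p.succAbove (σ i))

lemma insFun_bij {n : ℕ} (p : Fin (n + 1)) (σ : Perm (Fin n)) :
    Function.Bijective (insFun p σ) := by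
  rw [Fintype.bijective_iff_injective_and_card]
  refine ⟨?_, rfl⟩
  intro a b hab
  cases a using Fin.cases with
  | zero => cases b using Fin.cases with
    | zero => rfl
    | succ j => exact absurd hab.symm (Fin.succAbove_ne p (σ j))
  | succ i => cases b using Fin.cases with
    | zero => exact absurd hab (Fin.succAbove_ne p (σ i))
    | succ j =>
        simp only [insFun, Fin.cases_succ] at hab
        have := σ.injective (p.succAbove_right_injective hab)
        rw [this]

noncomputable def insPerm {n : ℕ} (p : Fin (n + 1)) (σ : Perm (Fin n)) : Perm (Fin (n + 1)) :=
  Equiv.ofBijective _ (insFun_bij p σ)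

@[simp] lemma insPerm_zero {n : ℕ} (p : Fin (n + 1)) (σ : Perm (Fin n)) :
    insPerm p σ 0 = p := rfl

@[simp] lemma insPerm_succ {n : ℕ} (p : Fin (n + 1)) (σ : Perm (Fin n)) (i : Fin n) :
    insPerm p σ i.succ = p.succAbove (σ i) := rfl

noncomputable def insEquiv (n : ℕ) : Fin (n + 1) × Perm (Fin n) ≃ Perm (Fin (n + 1)) :=
  Equiv.ofBijective (fun x => insPerm x.1 x.2) (by
    rw [Fintype.bijective_iff_injective_and_card]
    constructor
    · rintro ⟨p, σ⟩ ⟨q, ρ⟩ h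
      have h0 : p = q := by
        have := congrArg (fun f : Perm (Fin (n+1)) => f 0) h
        simpa using this
      subst h0
      refine Prod.ext rfl ?_
      show σ = ρ
      ext i
      have := congrArg (fun f : Perm (Fin (n+1)) => f i.succ) h
      simp only [insPerm_succ] at this
      exact congrArg Fin.val (p.succAbove_right_injective this)
    · simp [Fintype.card_perm, Nat.factorial_succ])

lemma recSet_card_le {n : ℕ} (τ : Perm (Fin n)) : (recSet τ).card ≤ n := by
  classical
  calc (recSet τ).card ≤ (Finset.univ : Finset (Fin n)).card := by
        apply Finset.card_le_card
        intro x hx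
        exact Finset.mem_univ x
    _ = n := by simp

lemma zero_mem_recSet_insPerm {n : ℕ} (p : Fin (n + 1)) (σ : Perm (Fin n)) :
    (0 : Fin (n + 1)) ∈ recSet (insPerm p σ) ↔ p = Fin.last n := by
  rw [mem_recSet]
  constructor
  · intro h
    by_contra hp
    have hlt : p < Fin.last n := lt_of_le_of_ne (Fin.le_last p) hp
    obtain ⟨w, hw⟩ := Fin.exists_succAbove_eq (Ne.symm hp)
    have := h (σ.symm w).succ (Fin.succ_pos _)
    simp only [insPerm_succ, Equiv.apply_symm_apply, insPerm_zero] at this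
    rw [hw] at this
    exact absurd (this.trans hlt) (lt_irrefl _)
  · intro h k' hk'
    have hk : k' ≠ 0 := Fin.pos_iff_ne_zero.mp hk'
    obtain ⟨i, rfl⟩ := Fin.eq_succ_of_ne_zero hk
    rw [insPerm_succ, insPerm_zero, h, Fin.succAbove_last]
    exact Fin.castSucc_lt_last _

lemma succ_mem_recSet_insPerm {n : ℕ} (p : Fin (n + 1)) (σ : Perm (Fin n)) (i : Fin n) :
    i.succ ∈ recSet (insPerm p σ) ↔ i ∈ recSet σ := by
  rw [mem_recSet, mem_recSet]
  constructor
  · intro h i' hi'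
    have := h i'.succ (by exact Fin.succ_lt_succ_iff.mpr hi')
    simp only [insPerm_succ] at this
    exact (Fin.succAbove_lt_succAbove_iff).mp this
  · intro h k' hk'
    have hk : k' ≠ 0 := by
      intro h0; rw [h0] at hk'; exact absurd hk' (Fin.not_lt_zero _)
    obtain ⟨i', rfl⟩ := Fin.eq_succ_of_ne_zero hk
    simp only [insPerm_succ]
    exact (Fin.succAbove_lt_succAbove_iff).mpr (h i' (Fin.succ_lt_succ_iff.mp hk'))

lemma recSet_insPerm_card {n : ℕ} (p : Fin (n + 1)) (σ : Perm (Fin n)) :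
    (recSet (insPerm p σ)).card
      = (recSet σ).card + (if p = Fin.last n then 1 else 0) := by
  classical
  have : recSet (insPerm p σ)
      = (recSet σ).image Fin.succ ∪ (if p = Fin.last n then {0} else ∅) := by
    ext k
    cases k using Fin.cases with
    | zero =>
        simp only [Finset.mem_union, Finset.mem_image]
        constructor
        · intro h
          right
          rw [(zero_mem_recSet_insPerm p σ).mp h]
          simp
        · intro h
          rcases h with ⟨i, _, hi⟩ | h
          · exact absurd hi (Fin.succ_ne_zero i)
          · rw [zero_mem_recSet_insPerm]
            by_contra hp
            rw [if_neg hp] at h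
            exact absurd h (Finset.notMem_empty 0)
    | succ i =>
        simp only [Finset.mem_union, Finset.mem_image]
        rw [succ_mem_recSet_insPerm]
        constructor
        · intro h; exact Or.inl ⟨i, h, rfl⟩
        · intro h
          rcases h with ⟨i', hi', he⟩ | h
          · rwa [← Fin.succ_injective _ he]
          · exfalso
            by_cases hp : p = Fin.last n
            · rw [if_pos hp] at h
              have h0 := Finset.mem_singleton.mp h
              exact Fin.succ_ne_zero i h0
            · rw [if_neg hp] at h
              exact Finset.notMem_empty _ h
  rw [this, Finset.card_union_of_disjoint, Finset.card_image_of_injective _ (Fin.succ_injective n)]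
  · congr 1
    by_cases hp : p = Fin.last n <;> simp [hp]
  · rw [Finset.disjoint_right]
    intro a ha
    by_cases hp : p = Fin.last n
    · rw [if_pos hp, Finset.mem_singleton] at ha
      subst ha
      simp only [Finset.mem_image, not_exists, not_and]
      intro i _ h
      exact Fin.succ_ne_zero i h
    · rw [if_neg hp] at ha
      exact absurd ha (Finset.notMem_empty a)

lemma dsum_succ (n : ℕ) : Dsum (n + 1) = (2 * n + 1) * Dsum n := by
  classical
  rw [Dsum, ← Equiv.sum_comp (insEquiv n) (fun τ => 2 ^ (n + 1 - (recSet τ).card))]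
  have : ∀ x : Fin (n + 1) × Perm (Fin n),
      (insEquiv n) x = insPerm x.1 x.2 := fun _ => rfl
  rw [Fintype.sum_prod_type]
  have key : ∀ (p : Fin (n+1)) (σ : Perm (Fin n)),
      2 ^ (n + 1 - (recSet (insPerm p σ)).card)
        = (if p = Fin.last n then 1 else 2) * 2 ^ (n - (recSet σ).card) := by
    intro p σ
    have hle := recSet_card_le σ
    rw [recSet_insPerm_card]
    by_cases hp : p = Fin.last n
    · rw [if_pos hp, if_pos hp, one_mul]
      congr 1
      omega
    · rw [if_neg hp, if_neg hp]
      have : n + 1 - ((recSet σ).card + 0) = (n - (recSet σ).card) + 1 := by omega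
      rw [this, pow_succ]
      ring
  have : ∀ p : Fin (n+1), ∑ σ : Perm (Fin n), 2 ^ (n + 1 - (recSet ((insEquiv n) (p, σ))).card)
      = (if p = Fin.last n then 1 else 2) * Dsum n := by
    intro p
    rw [Dsum, Finset.mul_sum]
    apply Finset.sum_congr rfl
    intro σ _
    rw [this (p, σ), key]
  rw [Finset.sum_congr rfl (fun p _ => this p), ← Finset.sum_mul]
  have h2 : (∑ p : Fin (n+1), if p = Fin.last n then (1:ℕ) else 2) = 2 * n + 1 := by
    rw [Finset.sum_ite]
    simp only [Finset.sum_const, smul_eq_mul, mul_one]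
    have ha : (Finset.univ.filter (fun p : Fin (n+1) => p = Fin.last n)) = {Fin.last n} := by
      ext x; simp
    have hb : (Finset.univ.filter (fun p : Fin (n+1) => ¬ p = Fin.last n))
        = {Fin.last n}ᶜ := by
      ext x; simp
    rw [ha, hb, Finset.card_singleton, Finset.card_compl, Finset.card_singleton]
    simp [Fintype.card_fin]
    omega
  rw [h2]

lemma dsum_zero : Dsum 0 = 1 := by
  rw [Dsum]
  rw [Fintype.sum_eq_single (1 : Perm (Fin 0))]
  · simp [recSet]
  · intro τ hτ
    exact absurd (Subsingleton.elim τ 1) hτ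

lemma dsum_factorial (n : ℕ) :
    Dsum n * (2 ^ n * n.factorial) = (2 * n).factorial := by
  induction n with
  | zero => simp [dsum_zero]
  | succ n ih =>
      have h1 : 2 * (n + 1) = (2 * n + 1) + 1 := by ring
      rw [dsum_succ, h1, Nat.factorial_succ, Nat.factorial_succ, Nat.factorial_succ,
        ← ih]
      ring


/-! ### Part 2: analysis of the 2×n game -/

lemma fin2_exhaust (i i' : Fin 2) : i' = i ∨ i' = i + 1 := by
  revert i i'; decide

lemma fin2_add_one_ne (i : Fin 2) : i + 1 ≠ i := by revert i; decide

lemma fin2_add_one_add_one (i : Fin 2) : i + 1 + 1 = i := by revert i; decide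

lemma perm2_one_iff (π : Equiv.Perm (Fin 2)) (i : Fin 2) :
    π (i + 1) = 1 ↔ ¬ (π i = 1) := by
  have hne : π (i + 1) ≠ π i := fun h => fin2_add_one_ne i (π.injective h)
  revert hne
  generalize π (i + 1) = a
  generalize π i = b
  revert a b; decide

lemma rpay_lt_iff {n : ℕ} (ω : Omega 2 n) (i : Fin 2) (j : Fin n) :
    RPay ω (i + 1) j < RPay ω i j ↔ (ω.1 j) i = 1 := by
  have hne : (ω.1 j) (i + 1) ≠ (ω.1 j) i :=
    fun h => fin2_add_one_ne i ((ω.1 j).injective h)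
  show (((ω.1 j) (i+1) : ℕ) : ℝ) < (((ω.1 j) i : ℕ) : ℝ) ↔ _
  rw [Nat.cast_lt]
  revert hne
  generalize (ω.1 j) (i + 1) = a
  generalize (ω.1 j) i = b
  revert a b; decide

lemma rowdom_char {n : ℕ} (ω : Omega 2 n) (Y : Finset (Fin n)) (hY : Y.Nonempty)
    (i : Fin 2) :
    RowDomIn (RPay ω) Finset.univ Y i ↔ ∀ j ∈ Y, (ω.1 j) (i + 1) = 1 := by
  constructor
  · rintro ⟨i', -, h⟩
    rcases fin2_exhaust i i' with rfl | rfl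
    · obtain ⟨j, hj⟩ := hY
      exact absurd (h j hj) (lt_irrefl _)
    · intro j hj
      have h2 := h j hj
      have hiff := rpay_lt_iff ω (i+1) j
      rw [fin2_add_one_add_one] at hiff
      exact hiff.mp h2
  · intro h
    refine ⟨i + 1, Finset.mem_univ _, fun j hj => ?_⟩
    have := (rpay_lt_iff ω (i+1) j).mpr (h j hj)
    rwa [fin2_add_one_add_one] at this

open Classical in
/-- The set of undominated columns (noncomputable filter). -/
noncomputable def Fcols {n : ℕ} (C : Fin 2 → Fin n → ℝ) : Finset (Fin n) :=
  Finset.univ.filter fun j => ¬ ColDomIn C Finset.univ Finset.univ j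

lemma mem_Fcols {n : ℕ} {C : Fin 2 → Fin n → ℝ} {j : Fin n} :
    j ∈ Fcols C ↔ ¬ ColDomIn C Finset.univ Finset.univ j := by
  simp [Fcols]

lemma coldom_mono {n : ℕ} {C : Fin 2 → Fin n → ℝ} {Y Y' : Finset (Fin n)} {j : Fin n}
    (h : ColDomIn C Finset.univ Y j) (hYY : Y ⊆ Y') :
    ColDomIn C Finset.univ Y' j := by
  obtain ⟨j', hj', hcmp⟩ := h
  exact ⟨j', hYY hj', hcmp⟩

open Classical in
lemma Fcols_stable {n : ℕ} (C : Fin 2 → Fin n → ℝ) :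
    (Fcols C).filter (fun j => ¬ ColDomIn C Finset.univ (Fcols C) j) = Fcols C := by
  classical
  apply Finset.filter_true_of_mem
  intro j hj
  rw [mem_Fcols] at hj
  exact fun h => hj (coldom_mono h (Finset.subset_univ _))

lemma cpay_inj {n : ℕ} (ω : Omega 2 n) (i : Fin 2) :
    Function.Injective (fun j => CPay ω i j) := by
  intro a b hab
  have : (((ω.2 i) a : ℕ) : ℝ) = (((ω.2 i) b : ℕ) : ℝ) := hab
  exact (ω.2 i).injective (Fin.val_injective (Nat.cast_injective this))

lemma Fcols_nonempty {n : ℕ} (ω : Omega 2 n) (hn : 1 ≤ n) :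
    (Fcols (CPay ω)).Nonempty := by
  have : Nonempty (Fin n) := ⟨⟨0, hn⟩⟩
  obtain ⟨j0, -, hj0⟩ :=
    Finset.exists_max_image Finset.univ (fun j => CPay ω 0 j) Finset.univ_nonempty
  refine ⟨j0, mem_Fcols.mpr ?_⟩
  rintro ⟨j', -, h⟩
  have h1 := h 0 (Finset.mem_univ 0)
  have h2 := hj0 j' (Finset.mem_univ j')
  linarith

/-- One-row subgames: elimination reaches the single column maximizing `C i`. -/
lemma elim_single_row {n : ℕ} (ω : Omega 2 n) (i : Fin 2) (Y : Finset (Fin n))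
    (hY : Y.Nonempty) :
    ∃ j0 ∈ Y, elimStep (RPay ω) (CPay ω) ({i}, Y) = ({i}, {j0}) := by
  classical
  obtain ⟨j0, hj0Y, hj0⟩ := Finset.exists_max_image Y (fun j => CPay ω i j) hY
  refine ⟨j0, hj0Y, ?_⟩
  have hrow : ({i} : Finset (Fin 2)).filter
      (fun i' => ¬ RowDomIn (RPay ω) {i} Y i') = {i} := by
    apply Finset.filter_true_of_mem
    intro i' hi'
    rw [Finset.mem_singleton] at hi'
    subst hi'
    rintro ⟨i'', hi'', h⟩
    rw [Finset.mem_singleton] at hi''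
    subst hi''
    obtain ⟨j, hj⟩ := hY
    exact absurd (h j hj) (lt_irrefl _)
  have hcol : Y.filter (fun j => ¬ ColDomIn (CPay ω) {i} Y j) = {j0} := by
    ext j
    rw [Finset.mem_filter, Finset.mem_singleton]
    constructor
    · rintro ⟨hjY, hnd⟩
      by_contra hne
      apply hnd
      refine ⟨j0, hj0Y, fun i' hi' => ?_⟩
      rw [Finset.mem_singleton] at hi'
      subst hi'
      exact lt_of_le_of_ne (hj0 j hjY) (fun h => hne (cpay_inj ω i' h))
    · rintro rfl
      refine ⟨hj0Y, ?_⟩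
      rintro ⟨j', hj', h⟩
      have := h i (Finset.mem_singleton_self i)
      have h2 := hj0 j' hj'
      linarith
  rw [elimStep]
  exact Prod.ext hrow hcol

lemma elim_fixed_single {n : ℕ} (ω : Omega 2 n) (i : Fin 2) (j0 : Fin n) :
    elimStep (RPay ω) (CPay ω) ({i}, {j0}) = ({i}, {j0}) := by
  obtain ⟨j1, hj1, h⟩ := elim_single_row ω i {j0} (Finset.singleton_nonempty j0)
  rw [Finset.mem_singleton] at hj1
  rwa [hj1] at h

open Classical in
lemma solvable_iff {n : ℕ} (ω : Omega 2 n) (hn : 1 ≤ n) :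
    GameSolvable ω ↔ ∃ i : Fin 2, ∀ j ∈ Fcols (CPay ω), (ω.1 j) i = 1 := by
  classical
  have hinst : Nonempty (Fin n) := ⟨⟨0, hn⟩⟩
  have hF : (Fcols (CPay ω)).Nonempty := Fcols_nonempty ω hn
  have hunivY : (Finset.univ : Finset (Fin n)).Nonempty := Finset.univ_nonempty
  have hcol1 : (Finset.univ : Finset (Fin n)).filter
      (fun j => ¬ ColDomIn (CPay ω) Finset.univ Finset.univ j) = Fcols (CPay ω) := rfl
  by_cases hwin : ∃ i : Fin 2, ∀ j ∈ Fcols (CPay ω), (ω.1 j) i = 1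
  · refine iff_of_true ?_ hwin
    obtain ⟨i, hi⟩ := hwin
    have main : ∃ j0 : Fin n,
        survivorsFrom (RPay ω) (CPay ω) (Finset.univ, Finset.univ) = ({i}, {j0}) := by
      by_cases hall : ∀ j : Fin n, (ω.1 j) i = 1
      · -- row i wins every column: eliminated other row in round 1
        have hX1 : Finset.univ.filter
            (fun i' => ¬ RowDomIn (RPay ω) Finset.univ Finset.univ i') = {i} := by
          ext i'
          rw [Finset.mem_filter, Finset.mem_singleton, rowdom_char ω Finset.univ hunivY i']
          constructor
          · rintro ⟨-, hnd⟩
            rcases fin2_exhaust i i' with rfl | rfl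
            · rfl
            · exfalso
              apply hnd
              intro j hj
              rw [fin2_add_one_add_one]
              exact hall j
          · rintro rfl
            refine ⟨Finset.mem_univ _, fun hdom => ?_⟩
            obtain ⟨j, hj⟩ := hunivY
            have h2 := hdom j (Finset.mem_univ j)
            rw [perm2_one_iff] at h2
            exact h2 (hall j)
        have hstep1 : elimStep (RPay ω) (CPay ω) (Finset.univ, Finset.univ)
            = ({i}, Fcols (CPay ω)) := by
          rw [elimStep]
          exact Prod.ext hX1 hcol1
        obtain ⟨j0, hj0, hstep2⟩ := elim_single_row ω i (Fcols (CPay ω)) hF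
        refine ⟨j0, ?_⟩
        show (elimStep (RPay ω) (CPay ω))^[2 + n] (Finset.univ, Finset.univ) = ({i}, {j0})
        rw [show 2 + n = n + 1 + 1 from by omega]
        rw [Function.iterate_succ_apply, hstep1, Function.iterate_succ_apply, hstep2]
        exact Function.iterate_fixed (elim_fixed_single ω i j0) n
      · -- row i wins exactly the frontier; other row eliminated in round 2
        push_neg at hall
        obtain ⟨j1, hj1⟩ := hall
        have hX1 : Finset.univ.filter
            (fun i' => ¬ RowDomIn (RPay ω) Finset.univ Finset.univ i') = Finset.univ := by
          apply Finset.filter_true_of_mem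
          intro i' _
          intro hdom
          rw [rowdom_char ω Finset.univ hunivY i'] at hdom
          rcases fin2_exhaust i i' with rfl | rfl
          · obtain ⟨j, hjF⟩ := hF
            have h2 := hdom j (Finset.mem_univ j)
            rw [perm2_one_iff] at h2
            exact h2 (hi j hjF)
          · have h2 := hdom j1 (Finset.mem_univ j1)
            rw [fin2_add_one_add_one] at h2
            exact hj1 h2
        have hstep1 : elimStep (RPay ω) (CPay ω) (Finset.univ, Finset.univ)
            = (Finset.univ, Fcols (CPay ω)) := by
          rw [elimStep]
          exact Prod.ext hX1 hcol1
        have hX2 : Finset.univ.filter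
            (fun i' => ¬ RowDomIn (RPay ω) Finset.univ (Fcols (CPay ω)) i') = {i} := by
          ext i'
          rw [Finset.mem_filter, Finset.mem_singleton, rowdom_char ω (Fcols (CPay ω)) hF i']
          constructor
          · rintro ⟨-, hnd⟩
            rcases fin2_exhaust i i' with rfl | rfl
            · rfl
            · exfalso
              apply hnd
              intro j hj
              rw [fin2_add_one_add_one]
              exact hi j hj
          · rintro rfl
            refine ⟨Finset.mem_univ _, fun hdom => ?_⟩
            obtain ⟨j, hjF⟩ := hF
            have h2 := hdom j hjF
            rw [perm2_one_iff] at h2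
            exact h2 (hi j hjF)
        have hstep2 : elimStep (RPay ω) (CPay ω) (Finset.univ, Fcols (CPay ω))
            = ({i}, Fcols (CPay ω)) := by
          rw [elimStep]
          exact Prod.ext hX2 (Fcols_stable (CPay ω))
        obtain ⟨j0, hj0, hstep3⟩ := elim_single_row ω i (Fcols (CPay ω)) hF
        refine ⟨j0, ?_⟩
        show (elimStep (RPay ω) (CPay ω))^[2 + n] (Finset.univ, Finset.univ) = ({i}, {j0})
        obtain ⟨k, rfl⟩ : ∃ k, n = k + 1 := ⟨n - 1, by omega⟩
        rw [show 2 + (k + 1) = k + 1 + 1 + 1 from by omega]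
        rw [Function.iterate_succ_apply, hstep1, Function.iterate_succ_apply, hstep2,
          Function.iterate_succ_apply, hstep3]
        exact Function.iterate_fixed (elim_fixed_single ω i j0) k
    obtain ⟨j0, hsurv⟩ := main
    refine ⟨?_, ?_⟩
    · show (survivorsFrom (RPay ω) (CPay ω) (Finset.univ, Finset.univ)).1.card = 1
      rw [hsurv]
      simp
    · show (survivorsFrom (RPay ω) (CPay ω) (Finset.univ, Finset.univ)).2.card = 1
      rw [hsurv]
      simp
  · refine iff_of_false ?_ hwin
    push_neg at hwin
    have hX1 : Finset.univ.filter
        (fun i' => ¬ RowDomIn (RPay ω) Finset.univ Finset.univ i') = Finset.univ := by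
      apply Finset.filter_true_of_mem
      intro i' _ hdom
      rw [rowdom_char ω Finset.univ hunivY i'] at hdom
      obtain ⟨j, hjF, hne⟩ := hwin (i' + 1)
      exact hne (hdom j (Finset.mem_univ j))
    have hstep1 : elimStep (RPay ω) (CPay ω) (Finset.univ, Finset.univ)
        = (Finset.univ, Fcols (CPay ω)) := by
      rw [elimStep]
      exact Prod.ext hX1 hcol1
    have hX2 : Finset.univ.filter
        (fun i' => ¬ RowDomIn (RPay ω) Finset.univ (Fcols (CPay ω)) i') = Finset.univ := by
      apply Finset.filter_true_of_mem
      intro i' _ hdom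
      rw [rowdom_char ω (Fcols (CPay ω)) hF i'] at hdom
      obtain ⟨j, hjF, hne⟩ := hwin (i' + 1)
      exact hne (hdom j hjF)
    have hfix : elimStep (RPay ω) (CPay ω) (Finset.univ, Fcols (CPay ω))
        = (Finset.univ, Fcols (CPay ω)) := by
      rw [elimStep]
      exact Prod.ext hX2 (Fcols_stable (CPay ω))
    have hsurv : survivorsFrom (RPay ω) (CPay ω) (Finset.univ, Finset.univ)
        = (Finset.univ, Fcols (CPay ω)) := by
      show (elimStep (RPay ω) (CPay ω))^[2 + n] (Finset.univ, Finset.univ) = _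
      rw [show 2 + n = n + 1 + 1 from by omega, Function.iterate_succ_apply, hstep1]
      exact Function.iterate_fixed hfix (n + 1)
    rintro ⟨h1, -⟩
    rw [show survivorsFrom (RPay ω) (CPay ω) (Finset.univ, Finset.univ)
      = (Finset.univ, Fcols (CPay ω)) from hsurv] at h1
    simp at h1

/-! ### Part 3: counting -/

/-- Column payoff matrix determined by the pair of permutations. -/
def CPayOf {n : ℕ} (c : Fin 2 → Equiv.Perm (Fin n)) : Fin 2 → Fin n → ℝ :=
  fun i j => ((c i j : ℕ) : ℝ)

lemma mem_Fcols_pair {n : ℕ} {c : Fin 2 → Equiv.Perm (Fin n)} {j : Fin n} :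
    j ∈ Fcols (CPayOf c) ↔ ∀ j', c 0 j < c 0 j' → c 1 j' < c 1 j := by
  rw [mem_Fcols]
  constructor
  · intro h j' hlt
    have hne : j' ≠ j := fun e => by subst e; exact absurd hlt (lt_irrefl _)
    have hns : ¬ (c 1 j < c 1 j') := by
      intro hlt1
      apply h
      refine ⟨j', Finset.mem_univ _, fun i _ => ?_⟩
      show ((c i j : ℕ) : ℝ) < ((c i j' : ℕ) : ℝ)
      rcases fin2_exhaust 0 i with rfl | hi
      · exact_mod_cast hlt
      · rw [show i = 1 from hi]
        exact_mod_cast hlt1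
    have hle : c 1 j' ≤ c 1 j := not_lt.mp hns
    exact lt_of_le_of_ne hle (fun e => hne ((c 1).injective e))
  · rintro h ⟨j', -, hd⟩
    have hd0 : ((c 0 j : ℕ) : ℝ) < ((c 0 j' : ℕ) : ℝ) := hd 0 (Finset.mem_univ _)
    have hd1 : ((c 1 j : ℕ) : ℝ) < ((c 1 j' : ℕ) : ℝ) := hd 1 (Finset.mem_univ _)
    have h0 : c 0 j < c 0 j' := by exact_mod_cast hd0
    have h1 : c 1 j < c 1 j' := by exact_mod_cast hd1
    exact absurd (h j' h0) (not_lt.mpr h1.le)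

lemma Fcols_card_eq {n : ℕ} (c : Fin 2 → Equiv.Perm (Fin n)) :
    (Fcols (CPayOf c)).card = (recSet (c 1 * (c 0)⁻¹)).card := by
  classical
  apply Finset.card_bij (fun j _ => c 0 j)
  · intro a ha
    rw [mem_recSet]
    intro k' hlt
    have h1 : c 1 ((c 0)⁻¹ k') < c 1 a := by
      apply mem_Fcols_pair.mp ha
      rwa [Equiv.Perm.coe_inv, Equiv.apply_symm_apply]
    simp only [Equiv.Perm.mul_apply, Equiv.Perm.coe_inv, Equiv.symm_apply_apply]
    exact h1
  · intro a _ b _ hab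
    exact (c 0).injective hab
  · intro b hb
    refine ⟨(c 0)⁻¹ b, ?_, Equiv.apply_symm_apply _ _⟩
    rw [mem_Fcols_pair]
    intro j' hlt
    rw [Equiv.Perm.coe_inv, Equiv.apply_symm_apply] at hlt
    have := mem_recSet.mp hb (c 0 j') hlt
    simp only [Equiv.Perm.mul_apply, Equiv.Perm.coe_inv, Equiv.symm_apply_apply] at this
    exact this

lemma sum_Fcols_eq {n : ℕ} :
    ∑ c : Fin 2 → Equiv.Perm (Fin n), 2 ^ (n - (Fcols (CPayOf c)).card)
      = Nat.factorial n * Dsum n := by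
  classical
  have h1 : ∀ c : Fin 2 → Equiv.Perm (Fin n),
      (2 : ℕ) ^ (n - (Fcols (CPayOf c)).card)
        = 2 ^ (n - (recSet (c 1 * (c 0)⁻¹)).card) := by
    intro c; rw [Fcols_card_eq]
  rw [Finset.sum_congr rfl (fun c _ => h1 c)]
  have h3 : ∑ c : Fin 2 → Equiv.Perm (Fin n), (2:ℕ) ^ (n - (recSet (c 1 * (c 0)⁻¹)).card)
      = ∑ p : Equiv.Perm (Fin n) × Equiv.Perm (Fin n), 2 ^ (n - (recSet (p.2 * p.1⁻¹)).card) :=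
    Fintype.sum_equiv (piFinTwoEquiv fun _ => Equiv.Perm (Fin n)) _ _ (fun c => rfl)
  rw [h3, Fintype.sum_prod_type]
  have h2 : ∀ x : Equiv.Perm (Fin n),
      ∑ y : Equiv.Perm (Fin n), (2:ℕ) ^ (n - (recSet (y * x⁻¹)).card) = Dsum n := by
    intro x
    exact Equiv.sum_comp (Equiv.mulRight x⁻¹) (fun τ => 2 ^ (n - (recSet τ).card))
  rw [Finset.sum_congr rfl (fun x _ => h2 x), Finset.sum_const, Finset.card_univ,
    Fintype.card_perm, Fintype.card_fin, smul_eq_mul]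

lemma swap_fin2_eval (i : Fin 2) : Equiv.swap 1 i (i + 1) = 0 := by
  revert i; decide

lemma perm2_eq_swap_iff {i : Fin 2} {π : Equiv.Perm (Fin 2)} :
    π i = 1 ↔ π = Equiv.swap 1 i := by
  constructor
  · intro h
    apply Equiv.ext
    intro x
    rcases fin2_exhaust i x with rfl | rfl
    · rw [h, Equiv.swap_apply_right]
    · have hne : π (i + 1) ≠ π i := fun e => fin2_add_one_ne i (π.injective e)
      rw [h] at hne
      have h0 : π (i + 1) = 0 := by
        revert hne
        generalize π (i + 1) = a
        revert a; decide
      rw [h0, swap_fin2_eval]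
  · rintro rfl
    exact Equiv.swap_apply_right 1 i

lemma card_coins {n : ℕ} (s : Finset (Fin n)) (i : Fin 2) :
    (Finset.univ.filter
      (fun a : Fin n → Equiv.Perm (Fin 2) => ∀ j ∈ s, a j i = 1)).card
      = 2 ^ (n - s.card) := by
  classical
  have hset : Finset.univ.filter
      (fun a : Fin n → Equiv.Perm (Fin 2) => ∀ j ∈ s, a j i = 1)
      = Fintype.piFinset (fun j => if j ∈ s then {Equiv.swap 1 i} else Finset.univ) := by
    ext a
    simp only [Finset.mem_filter, Finset.mem_univ, true_and, Fintype.mem_piFinset]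
    constructor
    · intro h j
      by_cases hj : j ∈ s
      · rw [if_pos hj, Finset.mem_singleton]
        exact perm2_eq_swap_iff.mp (h j hj)
      · rw [if_neg hj]; exact Finset.mem_univ _
    · intro h j hj
      have := h j
      rw [if_pos hj, Finset.mem_singleton] at this
      exact perm2_eq_swap_iff.mpr this
  rw [hset, Fintype.card_piFinset]
  have hcards : ∀ j : Fin n,
      (if j ∈ s then ({Equiv.swap 1 i} : Finset (Equiv.Perm (Fin 2))) else Finset.univ).card
      = if j ∈ s then 1 else 2 := by
    intro j
    by_cases hj : j ∈ s <;> simp [hj, Fintype.card_perm]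
  rw [Finset.prod_congr rfl (fun j _ => hcards j), Finset.prod_ite, Finset.prod_const,
    Finset.prod_const, one_pow, one_mul]
  congr 1
  have : Finset.univ.filter (fun j => j ∉ s) = sᶜ := by
    ext x; simp
  rw [this, Finset.card_compl, Fintype.card_fin]


open Classical in
lemma card_exists_coins {n : ℕ} (s : Finset (Fin n)) (hs : s.Nonempty) :
    (Finset.univ.filter
      (fun a : Fin n → Equiv.Perm (Fin 2) => ∃ i : Fin 2, ∀ j ∈ s, a j i = 1)).card
      = 2 * 2 ^ (n - s.card) := by
  classical
  have hsplit : Finset.univ.filter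
      (fun a : Fin n → Equiv.Perm (Fin 2) => ∃ i : Fin 2, ∀ j ∈ s, a j i = 1)
      = Finset.univ.filter (fun a : Fin n → Equiv.Perm (Fin 2) => ∀ j ∈ s, a j 0 = 1)
        ∪ Finset.univ.filter (fun a : Fin n → Equiv.Perm (Fin 2) => ∀ j ∈ s, a j 1 = 1) := by
    ext a
    simp only [Finset.mem_filter, Finset.mem_union, Finset.mem_univ, true_and,
      Fin.exists_fin_two]
  have hdisj : Disjoint
      (Finset.univ.filter (fun a : Fin n → Equiv.Perm (Fin 2) => ∀ j ∈ s, a j 0 = 1))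
      (Finset.univ.filter (fun a : Fin n → Equiv.Perm (Fin 2) => ∀ j ∈ s, a j 1 = 1)) := by
    rw [Finset.disjoint_left]
    intro a ha hb
    rw [Finset.mem_filter] at ha hb
    obtain ⟨j, hj⟩ := hs
    have h01 : a j 0 = a j 1 := by rw [ha.2 j hj, hb.2 j hj]
    exact absurd ((a j).injective h01) (by decide)
  rw [hsplit, Finset.card_union_of_disjoint hdisj, card_coins, card_coins, two_mul]

open Classical in
lemma card_solvable {n : ℕ} (hn : 1 ≤ n) :
    (Finset.univ.filter (fun ω : Omega 2 n => GameSolvable ω)).card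
      = 2 * (Nat.factorial n * Dsum n) := by
  classical
  rw [Finset.card_filter, Fintype.sum_prod_type, Finset.sum_comm]
  have hinner : ∀ b : Fin 2 → Equiv.Perm (Fin n),
      (∑ a : Fin n → Equiv.Perm (Fin 2), if GameSolvable (a, b) then 1 else 0)
        = 2 * 2 ^ (n - (Fcols (CPayOf b)).card) := by
    intro b
    have hcongr : ∀ a : Fin n → Equiv.Perm (Fin 2),
        (if GameSolvable (a, b) then (1:ℕ) else 0)
          = if (∃ i : Fin 2, ∀ j ∈ Fcols (CPayOf b), a j i = 1) then 1 else 0 := by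
      intro a
      congr 1
      rw [eq_iff_iff]
      exact solvable_iff (a, b) hn
    rw [Finset.sum_congr rfl (fun a _ => hcongr a), ← Finset.card_filter]
    apply card_exists_coins
    exact Fcols_nonempty (⟨fun _ => 1, b⟩ : Omega 2 n) hn
  rw [Finset.sum_congr rfl (fun b _ => hinner b), ← Finset.mul_sum, sum_Fcols_eq]

lemma card_Omega (n : ℕ) :
    Fintype.card (Omega 2 n) = 2 ^ n * (Nat.factorial n * Nat.factorial n) := by
  have : Fintype.card (Omega 2 n)
      = Fintype.card (Fin n → Equiv.Perm (Fin 2)) * Fintype.card (Fin 2 → Equiv.Perm (Fin n)) :=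
    Fintype.card_prod _ _
  rw [this, Fintype.card_fun, Fintype.card_fun, Fintype.card_perm, Fintype.card_perm,
    Fintype.card_fin, Fintype.card_fin]
  norm_num [Nat.factorial]
  ring

open Classical in
lemma Pr_eq_filter {m n : ℕ} (E : Set (Omega m n)) :
    Pr E = ((Finset.univ.filter (fun ω => ω ∈ E)).card : ℝ)
      / (Fintype.card (Omega m n) : ℝ) := by
  rw [Pr]
  have h : E.toFinite.toFinset = Finset.univ.filter (fun ω => ω ∈ E) := by
    ext ω
    simp only [Set.Finite.mem_toFinset, Finset.mem_filter, Finset.mem_univ, true_and]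
  rw [h]

lemma probSolvable_eq {n : ℕ} (hn : 1 ≤ n) :
    probSolvable 2 n = 2 * (Nat.centralBinom n : ℝ) / 4 ^ n := by
  classical
  rw [probSolvable, Pr_eq_filter]
  have h1 : (Finset.univ.filter (fun ω : Omega 2 n => ω ∈ {ω : Omega 2 n | GameSolvable ω}))
      = Finset.univ.filter (fun ω : Omega 2 n => GameSolvable ω) := by
    ext ω
    simp [Set.mem_setOf_eq]
  rw [h1, card_solvable hn, card_Omega n]
  have hd1 : ((2 ^ n * (Nat.factorial n * Nat.factorial n) : ℕ) : ℝ) ≠ 0 := by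
    positivity
  have hd2 : ((4 : ℝ) ^ n) ≠ 0 := by positivity
  rw [div_eq_div_iff (by positivity) (by positivity)]
  have h3 : Nat.centralBinom n * Nat.factorial n * Nat.factorial n = (2 * n).factorial := by
    have h := Nat.choose_mul_factorial_mul_factorial (show n ≤ 2 * n by omega)
    rw [Nat.centralBinom]
    simpa [show 2 * n - n = n by omega] using h
  have key : 2 * (Nat.factorial n * Dsum n) * 4 ^ n
      = 2 * Nat.centralBinom n * (2 ^ n * (Nat.factorial n * Nat.factorial n)) := by
    calc 2 * (Nat.factorial n * Dsum n) * 4 ^ n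
        = 2 * 2 ^ n * (Dsum n * (2 ^ n * Nat.factorial n)) := by
          rw [show (4 : ℕ) ^ n = 2 ^ n * 2 ^ n from by rw [← mul_pow]; norm_num]
          ring
      _ = 2 * 2 ^ n * (2 * n).factorial := by rw [dsum_factorial]
      _ = 2 * 2 ^ n * (Nat.centralBinom n * Nat.factorial n * Nat.factorial n) := by rw [h3]
      _ = 2 * Nat.centralBinom n * (2 ^ n * (Nat.factorial n * Nat.factorial n)) := by ring
  exact_mod_cast key

/-! ### Part 4: asymptotics -/

lemma centralBinom_cast (n : ℕ) :
    (Nat.centralBinom n : ℝ)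
      = ((2 * n).factorial : ℝ) / ((n.factorial : ℝ) * (n.factorial : ℝ)) := by
  have h3 : Nat.centralBinom n * Nat.factorial n * Nat.factorial n = (2 * n).factorial := by
    have h := Nat.choose_mul_factorial_mul_factorial (show n ≤ 2 * n by omega)
    rw [Nat.centralBinom]
    simpa [show 2 * n - n = n by omega] using h
  have hA : (Nat.factorial n : ℝ) ≠ 0 := by
    exact_mod_cast Nat.factorial_ne_zero n
  rw [eq_div_iff (by exact mul_ne_zero hA hA)]
  exact_mod_cast congrArg (fun k : ℕ => (k : ℝ)) (by linarith [h3] : 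
    Nat.centralBinom n * (Nat.factorial n * Nat.factorial n) = (2*n).factorial)

lemma sqrt_mul_prob {n : ℕ} (hn : 1 ≤ n) :
    Real.sqrt n * probSolvable 2 n
      = 2 * (Stirling.stirlingSeq (2 * n) / (Stirling.stirlingSeq n) ^ 2) := by
  rw [probSolvable_eq hn, centralBinom_cast]
  have hnR : (1 : ℝ) ≤ (n : ℝ) := by exact_mod_cast hn
  have hnpos : (0 : ℝ) < n := by linarith
  have hA : (0 : ℝ) < (Nat.factorial n : ℝ) := by
    exact_mod_cast Nat.factorial_pos n
  have hB : (0 : ℝ) < ((2 * n).factorial : ℝ) := by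
    exact_mod_cast Nat.factorial_pos (2 * n)
  have hsq : (0 : ℝ) < Real.sqrt (2 * n) := Real.sqrt_pos.mpr (by linarith)
  have hsn : (0 : ℝ) < Real.sqrt n := Real.sqrt_pos.mpr hnpos
  have hexp : (0 : ℝ) < Real.exp 1 := Real.exp_pos 1
  have hen : (0 : ℝ) < ((n : ℝ) / Real.exp 1) ^ n := by positivity
  simp only [Stirling.stirlingSeq]
  push_cast
  have f2 : Real.sqrt (2 * (2 * (n : ℝ))) = 2 * Real.sqrt n := by
    rw [show (2 : ℝ) * (2 * n) = 2 ^ 2 * n by ring, Real.sqrt_mul (by positivity),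
      Real.sqrt_sq (by norm_num : (0:ℝ) ≤ 2)]
  have f3 : ((2 * (n:ℝ)) / Real.exp 1) ^ (2 * n)
      = 4 ^ n * (((n:ℝ) / Real.exp 1) ^ n) ^ 2 := by
    rw [pow_mul, show ((2 * (n:ℝ)) / Real.exp 1) ^ 2 = 4 * ((n:ℝ)/Real.exp 1) ^ 2 by ring,
      mul_pow, ← pow_mul, ← pow_mul, Nat.mul_comm 2 n]
  rw [f2, f3]
  have hss : Real.sqrt n * Real.sqrt n = (n : ℝ) := Real.mul_self_sqrt hnpos.le
  have hsq2 : Real.sqrt (2 * n) * Real.sqrt (2 * n) = 2 * (n:ℝ) :=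
    Real.mul_self_sqrt (by linarith)
  field_simp
  ring_nf
  rw [Real.sq_sqrt hnpos.le, Real.sq_sqrt (by positivity : (0:ℝ) ≤ n * 2)]

end Aux

/-- `lim_(n→∞) n^(1/2) · π(2,n) = 2/√π`. -/
theorem stmt4 :
    Filter.Tendsto (fun n : ℕ => Real.sqrt n * probSolvable 2 n)
      Filter.atTop (nhds (2 / Real.sqrt Real.pi)) := by
  have h1 := Stirling.tendsto_stirlingSeq_sqrt_pi
  have h2 : Filter.Tendsto (fun n : ℕ => Stirling.stirlingSeq (2 * n))
      Filter.atTop (nhds (Real.sqrt Real.pi)) :=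
    h1.comp (Filter.tendsto_atTop_atTop.mpr (fun b => ⟨b, fun a ha => by omega⟩))
  have hpi : Real.sqrt Real.pi ≠ 0 := ne_of_gt (Real.sqrt_pos.mpr Real.pi_pos)
  have h3 : Filter.Tendsto
      (fun n : ℕ => 2 * (Stirling.stirlingSeq (2 * n) / (Stirling.stirlingSeq n) ^ 2))
      Filter.atTop (nhds (2 * (Real.sqrt Real.pi / (Real.sqrt Real.pi) ^ 2))) :=
    (h2.div (h1.pow 2) (pow_ne_zero 2 hpi)).const_mul 2
  have heq : 2 * (Real.sqrt Real.pi / (Real.sqrt Real.pi) ^ 2) = 2 / Real.sqrt Real.pi := by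
    rw [Real.sq_sqrt Real.pi_pos.le, eq_div_iff hpi]
    have hss := Real.mul_self_sqrt Real.pi_pos.le
    field_simp
    linear_combination hss
  rw [heq] at h3
  apply h3.congr'
  rw [Filter.eventuallyEq_iff_exists_mem]
  exact ⟨{n | 1 ≤ n}, Filter.mem_atTop 1, fun n hn => (sqrt_mul_prob hn).symm⟩
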